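/- Let g(q) = max_{k=2..N} |1 - εq λ_k| with 0 < λ_2 ≤ ... ≤ λ_N and 0 < ε λ_N q < 2 for all q in the relevant range. Then g is strictly decreasing in q as long as 1 - εqλ_2 ≥ |1 - εqλ_N| and in particular is minimized over q ∈ [0, q_max] at q = q_max whenever ε q_max λ_N ≤ 1. Consequently, the access probability p minimizing the spectral radius ρ(E[W̄] - 𝟙𝟙ᵀ/N) coincides with the p maximizing q(p) = p(1-p)^d, namely p = 1/(d+1). -/

import Mathlib

open Finset

lemma f_hasDeriv (n : ℕ) (x : ℝ) :
    HasDerivAt (fun x : ℝ => x * (1 - x) ^ (n + 1))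
      ((1 - x) ^ n * (1 - ((n : ℝ) + 2) * x)) x := by
  have h1 : HasDerivAt (fun x : ℝ => 1 - x) (-1) x := (hasDerivAt_id x).const_sub 1
  have h2 := h1.pow (n + 1)
  have h3 : HasDerivAt (fun x : ℝ => x * (1 - x) ^ (n + 1))
      (1 * (1 - x) ^ (n + 1) + x * (((n + 1 : ℕ) : ℝ) * (1 - x) ^ (n + 1 - 1) * -1)) x :=
    (hasDerivAt_id x).mul h2
  convert h3 using 1
  simp only [Nat.add_sub_cancel, id_eq]
  push_cast
  ring_nf

lemma pmax_strict (n : ℕ) (p : ℝ) (hp : p ∈ Set.Icc (0 : ℝ) 1)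
    (hne : p ≠ 1 / ((n : ℝ) + 2)) :
    p * (1 - p) ^ (n + 1) <
      (1 / ((n : ℝ) + 2)) * (1 - 1 / ((n : ℝ) + 2)) ^ (n + 1) := by
  set f : ℝ → ℝ := fun x => x * (1 - x) ^ (n + 1) with hf
  have hn2 : (0 : ℝ) < (n : ℝ) + 2 := by positivity
  have hps : (0 : ℝ) < 1 / ((n : ℝ) + 2) := by positivity
  have hps1 : 1 / ((n : ℝ) + 2) < 1 := by
    rw [div_lt_one hn2]; nlinarith
  have hc : Continuous f := by fun_prop
  have hderiv : ∀ x, deriv f x = (1 - x) ^ n * (1 - ((n : ℝ) + 2) * x) :=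
    fun x => (f_hasDeriv n x).deriv
  have hmono : StrictMonoOn f (Set.Icc 0 (1 / ((n : ℝ) + 2))) := by
    apply strictMonoOn_of_deriv_pos (convex_Icc _ _) hc.continuousOn
    intro x hx
    rw [interior_Icc] at hx
    rw [hderiv]
    have hx1 : x < 1 := lt_trans hx.2 hps1
    have h1 : 0 < (1 - x) ^ n := pow_pos (by linarith) n
    have h2 : 0 < 1 - ((n : ℝ) + 2) * x := by
      have := hx.2
      rw [lt_div_iff₀ hn2] at this
      nlinarith
    positivity
  have hanti : StrictAntiOn f (Set.Icc (1 / ((n : ℝ) + 2)) 1) := by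
    apply strictAntiOn_of_deriv_neg (convex_Icc _ _) hc.continuousOn
    intro x hx
    rw [interior_Icc] at hx
    rw [hderiv]
    have h1 : 0 < (1 - x) ^ n := pow_pos (by linarith [hx.2]) n
    have h2 : 1 - ((n : ℝ) + 2) * x < 0 := by
      have := hx.1
      rw [div_lt_iff₀ hn2] at this
      nlinarith
    nlinarith
  rcases lt_or_gt_of_ne hne with h | h
  · exact hmono ⟨hp.1, h.le⟩ ⟨hps.le, le_refl _⟩ h
  · exact hanti ⟨le_refl _, hps1.le⟩ ⟨h.le, hp.2⟩ h

/-- Let `g(q) = max_k |1 - ε q λ_k|` over the nonzero Laplacian eigenvalues `λ_k > 0`.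
If `ε q_max λ_max ≤ 1` with `q_max = d^d/(d+1)^{d+1}` (the maximum of `q(p) = p(1-p)^d`),
then `g` is strictly decreasing on `[0, q_max]`, is minimized at `q_max`, and consequently
the access probability minimizing the spectral radius is the one maximizing `q(p)`,
namely `p = 1/(d+1)`. -/
theorem optimal_access_minimizes_spectral_radius
    (m : ℕ) (hm : 0 < m) (lam : Fin m → ℝ) (hlam : ∀ k, 0 < lam k)
    (ε : ℝ) (hε : 0 < ε) (d : ℕ) (hd : 1 ≤ d)
    (qmax : ℝ) (hqmax : qmax = (d : ℝ) ^ d / ((d : ℝ) + 1) ^ (d + 1))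
    (hsmall : ε * qmax * (Finset.univ.sup' ⟨⟨0, hm⟩, Finset.mem_univ _⟩ lam) ≤ 1)
    (g : ℝ → ℝ)
    (hg : g = fun q => Finset.univ.sup' ⟨⟨0, hm⟩, Finset.mem_univ _⟩
        (fun k => |1 - ε * q * lam k|)) :
    StrictAntiOn g (Set.Icc 0 qmax) ∧
    (∀ q ∈ Set.Icc (0 : ℝ) qmax, g qmax ≤ g q) ∧
    (∀ p ∈ Set.Icc (0 : ℝ) 1, p ≠ 1 / ((d : ℝ) + 1) →
      g ((1 / ((d : ℝ) + 1)) * (1 - 1 / ((d : ℝ) + 1)) ^ d) < g (p * (1 - p) ^ d)) := by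
  have hdR : (1 : ℝ) ≤ (d : ℝ) := by exact_mod_cast hd
  have hqpos : 0 < qmax := by
    rw [hqmax]
    have h1 : (0:ℝ) < (d:ℝ) ^ d := pow_pos (by linarith) d
    have h2 : (0:ℝ) < ((d:ℝ)+1) ^ (d+1) := pow_pos (by linarith) _
    positivity
  set ne : (Finset.univ : Finset (Fin m)).Nonempty := ⟨⟨0, hm⟩, Finset.mem_univ _⟩
  set K := Finset.univ.sup' ne lam with hK
  set μ := Finset.univ.inf' ne lam with hμ
  obtain ⟨k0, -, hk0⟩ := Finset.exists_mem_eq_inf' ne lam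
  have hμpos : 0 < μ := by rw [hμ, hk0]; exact hlam k0
  have hμle : ∀ k, μ ≤ lam k := fun k => Finset.inf'_le lam (Finset.mem_univ k)
  have hleK : ∀ k, lam k ≤ K := fun k => Finset.le_sup' lam (Finset.mem_univ k)
  have hμK : μ ≤ K := (hμle k0).trans (hleK k0) |>.trans_eq rfl
  have key : ∀ q ∈ Set.Icc (0:ℝ) qmax, g q = 1 - ε * q * μ := by
    intro q hq
    simp only [hg]
    have hbound : ∀ k : Fin m, ε * q * lam k ≤ 1 := by
      intro k
      calc ε * q * lam k ≤ ε * qmax * K := by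
            have h1 : 0 ≤ ε * q := mul_nonneg hε.le hq.1
            have h2 : ε * q ≤ ε * qmax := by nlinarith [hq.2]
            nlinarith [hlam k, hleK k, (hlam k).trans_le (hleK k)]
        _ ≤ 1 := hsmall
    apply le_antisymm
    · apply Finset.sup'_le
      intro k _
      rw [abs_of_nonneg (by linarith [hbound k])]
      have : ε * q * μ ≤ ε * q * lam k :=
        mul_le_mul_of_nonneg_left (hμle k) (mul_nonneg hε.le hq.1)
      linarith
    · calc 1 - ε * q * μ ≤ |1 - ε * q * lam k0| := by
            rw [← hk0]; exact le_abs_self _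
        _ ≤ _ := by exact Finset.le_sup' (fun k => |1 - ε * q * lam k|) (Finset.mem_univ k0)
  have hanti : StrictAntiOn g (Set.Icc 0 qmax) := by
    intro a ha b hb hab
    rw [key a ha, key b hb]
    have : 0 < ε * μ := mul_pos hε hμpos
    nlinarith
  refine ⟨hanti, fun q hq => ?_, fun p hp hne => ?_⟩
  · rcases eq_or_lt_of_le hq.2 with h | h
    · rw [h]
    · exact (hanti hq ⟨hqpos.le, le_refl _⟩ h).le
  · obtain ⟨n, rfl⟩ : ∃ n, d = n + 1 := ⟨d - 1, (Nat.succ_pred_eq_of_pos hd).symm⟩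
    have hcast : ((n + 1 : ℕ) : ℝ) + 1 = (n : ℝ) + 2 := by push_cast; ring
    have hval : (1 / (((n:ℕ):ℝ) + 2)) * (1 - 1 / ((n:ℝ) + 2)) ^ (n+1) = qmax := by
      rw [hqmax]
      have hn2 : ((n:ℝ) + 2) ≠ 0 := by positivity
      have h1 : (1 : ℝ) - 1 / ((n:ℝ) + 2) = ((n:ℝ)+1) / ((n:ℝ) + 2) := by
        field_simp
        ring
      rw [h1, div_pow, div_mul_div_comm, one_mul, ← pow_succ']
      push_cast
      ring_nf
    have hlt : p * (1 - p) ^ (n+1) < qmax := by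
      rw [← hval]
      have := pmax_strict n p hp (by rwa [hcast] at hne)
      convert this using 3 <;> push_cast <;> ring
    have h0 : 0 ≤ p * (1 - p) ^ (n+1) :=
      mul_nonneg hp.1 (pow_nonneg (by linarith [hp.2]) _)
    have := hanti ⟨h0, hlt.le⟩ ⟨hqpos.le, le_refl _⟩ hlt
    have heq : (1 / (((n+1:ℕ) : ℝ) + 1)) * (1 - 1 / (((n+1:ℕ):ℝ) + 1)) ^ (n+1) = qmax := by
      rw [← hval]; push_cast; ring_nf
    rw [heq]
    exact this
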